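/- arXiv:1610.05939 — 5 statements merged into one kernel-verified Lean document; each statement's English description precedes it below -/
import Mathlib

section
/- Let A be a unital C*-algebra, x ∈ A, and λ > 0. Then ‖x‖ ≤ λ if and only if there exists y ∈ A such that (x*x)/λ² + y*y − y − y* = 0. Moreover, in this case y can be chosen to be a positive contraction, namely y = 1 − √(1 − x*x/λ²). -/
/-- Let `A` be a unital C*-algebra, `x ∈ A`, `λ > 0`.  Then `‖x‖ ≤ λ` iff
there exists `y ∈ A` with `(x*x)/λ² + y*y − y − y* = 0`; moreover, in that case `y` can be
chosen to be a positive contraction, namely `y = 1 − √(1 − x*x/λ²)`. -/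
theorem stmt0 {A : Type*} [CStarAlgebra A] [PartialOrder A] [StarOrderedRing A]
    (x : A) (l : ℝ) (hl : 0 < l) :
    (‖x‖ ≤ l ↔ ∃ y : A, ((l ^ 2)⁻¹ : ℝ) • (star x * x) + star y * y - y - star y = 0) ∧
    (‖x‖ ≤ l →
      ∃ y : A, ((l ^ 2)⁻¹ : ℝ) • (star x * x) + star y * y - y - star y = 0 ∧
        0 ≤ y ∧ y ≤ 1 ∧
        y = (1 : A) - CFC.sqrt ((1 : A) - ((l ^ 2)⁻¹ : ℝ) • (star x * x))) := by
  set a : A := ((l ^ 2)⁻¹ : ℝ) • (star x * x) with ha_def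
  have ha : 0 ≤ a := smul_nonneg (by positivity) (star_mul_self_nonneg x)
  have hnorm : ‖a‖ = (l ^ 2)⁻¹ * ‖x‖ ^ 2 := by
    rw [ha_def, norm_smul, CStarRing.norm_star_mul_self]
    rw [Real.norm_eq_abs, abs_of_nonneg (by positivity : (0:ℝ) ≤ (l ^ 2)⁻¹), sq]; ring
  have key : ‖x‖ ≤ l ↔ a ≤ 1 := by
    rw [← CStarAlgebra.norm_le_one_iff_of_nonneg a ha, hnorm,
      inv_mul_le_iff₀ (by positivity), mul_one]
    constructor
    · intro h; exact pow_le_pow_left₀ (norm_nonneg x) h 2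
    · intro h; nlinarith [norm_nonneg x]
  -- forward construction
  have main : ‖x‖ ≤ l →
      ∃ y : A, a + star y * y - y - star y = 0 ∧
        0 ≤ y ∧ y ≤ 1 ∧ y = (1 : A) - CFC.sqrt ((1 : A) - a) := by
    intro hx
    have ha1 : a ≤ 1 := key.mp hx
    have hb : (0 : A) ≤ 1 - a := sub_nonneg.mpr ha1
    set s : A := CFC.sqrt (1 - a) with hs_def
    have hs0 : 0 ≤ s := CFC.sqrt_nonneg (1 - a)
    have hssa : IsSelfAdjoint s := .of_nonneg hs0
    have hsq : s ^ 2 = 1 - a := CFC.sq_sqrt (1 - a) hb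
    have hs1 : s ≤ 1 := by
      rw [← CStarAlgebra.norm_le_one_iff_of_nonneg s hs0]
      have h1 : ‖s‖ * ‖s‖ = ‖1 - a‖ := by
        rw [← CStarRing.norm_star_mul_self, hssa.star_eq, ← sq, hsq]
      have h2 : ‖(1 : A) - a‖ ≤ 1 := by
        rw [CStarAlgebra.norm_le_one_iff_of_nonneg _ hb]
        simpa using ha
      nlinarith [norm_nonneg s]
    refine ⟨1 - s, ?_, sub_nonneg.mpr hs1, by simpa using hs0, rfl⟩
    have hstar : star ((1 : A) - s) = 1 - s := by
      simp [hssa.star_eq]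
    rw [hstar]
    have h2 : ((1 : A) - s) * (1 - s) = 1 - s - s + s ^ 2 := by
      noncomm_ring
    rw [h2, hsq]
    abel
  refine ⟨⟨fun hx => (main hx).imp fun y hy => hy.1, fun ⟨y, hy⟩ => ?_⟩, main⟩
  rw [key]
  have : a = 1 - star (1 - y) * (1 - y) := by
    have h := hy
    have expand : star ((1:A) - y) * (1 - y) = 1 - y - star y + star y * y := by
      simp [sub_mul, mul_sub]; abel
    rw [expand]
    have h3 : a = y + star y - star y * y := by
      have h4 : a + star y * y - y - star y = 0 := hy
      linear_combination (norm := abel) h4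
    rw [h3]; abel
  rw [this]
  simpa using star_mul_self_nonneg ((1:A) - y)
end

section
/- Let G be a group acting on a unital C*-algebra D via α. Let q ∈ D be a projection with q · α_g(q) = 0 for all g ∈ G with g ≠ e, and let t ∈ D be an isometry with t* q t = 1. For a finite nonempty subset K ⊆ G, define s = |K|^{-1/2} · Σ_{g∈K} α_g(q t). Then s is an isometry: s*s = 1. -/
/-- (Følner averaging.)  Let `G` act on a unital C*-algebra `D` via `α`,
let `q` be a projection with `q · α_g(q) = 0` for all `g ≠ e`, and let `t` be an isometry
with `t* q t = 1`.  For a finite nonempty `K ⊆ G`, the element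
`s = |K|^{-1/2} · Σ_{g∈K} α_g(q t)` is an isometry: `s*s = 1`. -/
theorem stmt8 {D : Type*} [CStarAlgebra D] {G : Type*} [Group G]
    (α : G → D ≃⋆ₐ[ℂ] D)
    (hα_mul : ∀ g h : G, ∀ a : D, α (g * h) a = α g (α h a))
    (hα_one : ∀ a : D, α 1 a = a)
    (q : D) (hq_sa : IsSelfAdjoint q) (hq_idem : q * q = q)
    (hq_orth : ∀ g : G, g ≠ 1 → q * α g q = 0)
    (t : D) (ht_isom : star t * t = 1) (htqt : star t * q * t = 1)
    (K : Finset G) (hK : K.Nonempty) :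
    star (((Real.sqrt K.card : ℂ))⁻¹ • ∑ g ∈ K, α g (q * t)) *
      (((Real.sqrt K.card : ℂ))⁻¹ • ∑ g ∈ K, α g (q * t)) = 1 := by
  classical
  have key : ∀ g ∈ K, ∀ h ∈ K,
      star (α g (q * t)) * α h (q * t) = if g = h then 1 else 0 := by
    classical
    intro g _ h _
    have hstar : star (α g (q * t)) = α g (star t * q) := by
      rw [← map_star]
      congr 1
      rw [star_mul, hq_sa.star_eq]
    by_cases hgh : g = h
    · subst hgh
      simp only [if_pos rfl]
      rw [hstar, ← map_mul]
      have : (star t * q) * (q * t) = star t * q * t := by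
        calc (star t * q) * (q * t) = star t * (q * q) * t := by noncomm_ring
        _ = star t * q * t := by rw [hq_idem]
      rw [this, htqt, map_one]
      simp
    · simp only [if_neg hgh]
      have hh : α h (q * t) = α g (α (g⁻¹ * h) (q * t)) := by
        rw [← hα_mul, mul_inv_cancel_left]
      rw [hstar, hh, ← map_mul]
      have hne : g⁻¹ * h ≠ 1 := by
        intro hc
        exact hgh (inv_mul_eq_one.mp hc)
      have : (star t * q) * α (g⁻¹ * h) (q * t) = 0 := by
        rw [map_mul, ← mul_assoc, mul_assoc (star t), hq_orth _ hne, mul_zero, zero_mul]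
      rw [this, map_zero]
  have hsum : star (∑ g ∈ K, α g (q * t)) * (∑ g ∈ K, α g (q * t))
      = (K.card : D) := by
    rw [star_sum, Finset.sum_mul_sum]
    rw [Finset.sum_congr rfl (fun g hg => Finset.sum_congr rfl (fun h hh => key g hg h hh))]
    simp [Finset.sum_ite_eq, Nat.cast_smul_eq_nsmul]
  rw [star_smul, smul_mul_smul_comm, hsum]
  have hpos : (0:ℝ) < K.card := by
    exact_mod_cast Finset.card_pos.mpr hK
  have hsqrt : Real.sqrt K.card * Real.sqrt K.card = K.card :=
    Real.mul_self_sqrt (le_of_lt hpos)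
  have hne : (Real.sqrt K.card : ℂ) ≠ 0 := by
    simp only [ne_eq, Complex.ofReal_eq_zero]
    positivity
  rw [star_inv₀]
  have : star ((Real.sqrt K.card : ℂ)) = (Real.sqrt K.card : ℂ) := by
    simp [Complex.star_def]
  rw [this]
  have hc : ((Real.sqrt K.card : ℂ))⁻¹ * ((Real.sqrt K.card : ℂ))⁻¹ * (K.card : ℂ) = 1 := by
    rw [← Complex.ofReal_natCast, ← hsqrt]
    push_cast
    field_simp
    rw [Real.sqrt_sq (Real.sqrt_nonneg _)]
    exact div_self (pow_ne_zero 2 hne)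
  rw [show ((K.card : D)) = ((K.card : ℂ)) • (1 : D) by rw [← Algebra.algebraMap_eq_smul_one, map_natCast], smul_smul, hc, one_smul]
end

section
/- Let G be a group acting on a unital C*-algebra D via α, let q ∈ D be a projection with q α_g(q) = 0 for all g ≠ e, let t ∈ D be an isometry with t*qt = 1, and for a finite nonempty K ⊆ G set s = |K|^{-1/2} Σ_{g∈K} α_g(qt). Then for every h ∈ G, ‖s − α_h(s)‖² = |K Δ hK| / |K|, where K Δ hK denotes the symmetric difference of K and hK = {hg : g ∈ K}. -/
/-- In the Følner averaging construction, with
`s = |K|^{-1/2} Σ_{g∈K} α_g(q t)`, one has `‖s − α_h(s)‖² = |K Δ hK| / |K|` for every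
`h ∈ G`, where `hK = {h·g : g ∈ K}`. -/
theorem stmt9 {D : Type*} [CStarAlgebra D] [Nontrivial D] {G : Type*} [Group G]
    [DecidableEq G]
    (α : G → D ≃⋆ₐ[ℂ] D)
    (hα_mul : ∀ g h : G, ∀ a : D, α (g * h) a = α g (α h a))
    (hα_one : ∀ a : D, α 1 a = a)
    (q : D) (hq_sa : IsSelfAdjoint q) (hq_idem : q * q = q)
    (hq_orth : ∀ g : G, g ≠ 1 → q * α g q = 0)
    (t : D) (ht_isom : star t * t = 1) (htqt : star t * q * t = 1)
    (K : Finset G) (hK : K.Nonempty) (h : G) :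
    ‖(((Real.sqrt K.card : ℂ))⁻¹ • ∑ g ∈ K, α g (q * t)) -
        α h (((Real.sqrt K.card : ℂ))⁻¹ • ∑ g ∈ K, α g (q * t))‖ ^ 2 =
      ((symmDiff K (K.image (fun g => h * g))).card : ℝ) / K.card := by
  set v : G → D := fun g => α g (q * t) with hv_def
  have hv : ∀ g g' : G, star (v g) * v g' = if g = g' then 1 else 0 := by
    intro g g'
    have key : star (v g) * v g' = α g (star (q * t) * α (g⁻¹ * g') (q * t)) := by
      rw [hv_def]; simp only []
      rw [show g' = g * (g⁻¹ * g') by group, hα_mul, ← map_star, ← map_mul]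
      congr 2; group
    by_cases hgg : g = g'
    · have h1 : g⁻¹ * g' = 1 := by rw [← hgg]; group
      have inner1 : star (q * t) * (q * t) = 1 := by
        calc star (q * t) * (q * t) = star t * (q * q) * t := by
              rw [star_mul, hq_sa.star_eq]; noncomm_ring
        _ = 1 := by rw [hq_idem, htqt]
      rw [key, h1, hα_one, inner1, map_one, if_pos hgg]
    · have hk1 : g⁻¹ * g' ≠ 1 := fun hc => hgg (inv_mul_eq_one.mp hc)
      have inner0 : star (q * t) * α (g⁻¹ * g') (q * t) = 0 := by
        calc star (q * t) * α (g⁻¹ * g') (q * t)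
            = star t * (q * α (g⁻¹ * g') q) * α (g⁻¹ * g') t := by
              rw [star_mul, hq_sa.star_eq, map_mul]; noncomm_ring
        _ = 0 := by rw [hq_orth _ hk1]; simp
      rw [key, inner0, map_zero, if_neg hgg]
  have hsum : ∀ S T : Finset G,
      star (∑ g ∈ S, v g) * (∑ g ∈ T, v g) = ((S ∩ T).card) • (1 : D) := by
    intro S T
    rw [star_sum, Finset.sum_mul_sum]
    simp only [hv]
    simp [Finset.sum_ite_eq, Finset.sum_ite_mem]
  set K' : Finset G := K.image (fun g => h * g) with hK'
  have hαs : α h (∑ g ∈ K, v g) = ∑ g ∈ K', v g := by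
    rw [map_sum, hK', Finset.sum_image (fun a _ b _ e => mul_left_cancel e)]
    exact Finset.sum_congr rfl fun g _ => (hα_mul h g _).symm
  set A : D := ∑ g ∈ K \ K', v g with hA
  set B : D := ∑ g ∈ K' \ K, v g with hB
  set c : ℂ := ((Real.sqrt K.card : ℂ))⁻¹ with hc
  have hx : (c • ∑ g ∈ K, v g) - α h (c • ∑ g ∈ K, v g) = c • (A - B) := by
    rw [map_smul, hαs, ← smul_sub]
    congr 1
    rw [← Finset.sum_inter_add_sum_sdiff K K' v, ← Finset.sum_inter_add_sum_sdiff K' K v,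
      Finset.inter_comm K' K]
    abel
  set m : ℕ := (symmDiff K K').card with hm
  have hmcard : m = (K \ K').card + (K' \ K).card := by
    rw [hm, symmDiff_def, Finset.sup_eq_union,
      Finset.card_union_of_disjoint disjoint_sdiff_sdiff]
  have hRR : star (A - B) * (A - B) = m • (1 : D) := by
    rw [star_sub, sub_mul, mul_sub, mul_sub, hA, hB, hsum, hsum, hsum, hsum]
    have hd : (K \ K') ∩ (K' \ K) = ∅ :=
      Finset.disjoint_iff_inter_eq_empty.mp disjoint_sdiff_sdiff
    rw [Finset.inter_self, Finset.inter_self, hd, Finset.inter_comm, hd]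
    simp [hmcard, add_smul]
  have hxx : star (c • (A - B)) * (c • (A - B)) =
      (((m : ℝ) / K.card : ℝ) : ℂ) • (1 : D) := by
    have hcc : star c * c = (((K.card : ℝ)⁻¹ : ℝ) : ℂ) := by
      have hnn : (0:ℝ) ≤ (K.card : ℝ) := Nat.cast_nonneg _
      simp [hc, ← Complex.ofReal_inv, ← Complex.ofReal_mul, Complex.star_def,
        Complex.conj_ofReal, ← mul_inv, Real.mul_self_sqrt hnn]
    rw [star_smul, smul_mul_smul_comm, hRR, hcc, ← Nat.cast_smul_eq_nsmul ℂ, smul_smul]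
    congr 1
    push_cast
    ring
  have hn0 : (0:ℝ) < K.card := by exact_mod_cast hK.card_pos
  have hnorm : ‖c • (A - B)‖ ^ 2 = (m : ℝ) / K.card := by
    have h1 : ‖star (c • (A - B)) * (c • (A - B))‖ = ‖c • (A - B)‖ * ‖c • (A - B)‖ :=
      CStarRing.norm_star_mul_self
    rw [pow_two, ← h1, hxx, norm_smul, norm_one, mul_one, Complex.norm_real, Real.norm_eq_abs,
      abs_of_nonneg (by positivity)]
  rw [hx, hnorm]
end

section
/- Let G be a group acting on a unital C*-algebra D via α, let q ∈ D be a projection with q α_g(q) = 0 for all g ≠ e, let t ∈ D be an isometry with t*qt = 1, and for a finite nonempty K ⊆ G set s = |K|^{-1/2} Σ_{g∈K} α_g(qt). Then (Σ_{g∈K} α_g(q)) · s = s, and for any g₀ ∈ G ∖ K one has Σ_{g∈K} α_g(q) ≤ 1 − α_{g₀}(q). In particular, if G ∖ K is nonempty and q ≠ 0, then s is not a unitary. -/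
/-- In the Følner averaging construction with
`s = |K|^{-1/2} Σ_{g∈K} α_g(qt)`: one has `(Σ_{g∈K} α_g(q)) · s = s`; for any `g₀ ∉ K`,
`Σ_{g∈K} α_g(q) ≤ 1 − α_{g₀}(q)`; and if `G ∖ K` is nonempty and `q ≠ 0`, then `s` is not a
unitary. -/
theorem stmt10 {D : Type*} [CStarAlgebra D] [PartialOrder D] [StarOrderedRing D]
    {G : Type*} [Group G]
    (α : G → D ≃⋆ₐ[ℂ] D)
    (hα_mul : ∀ g h : G, ∀ a : D, α (g * h) a = α g (α h a))
    (hα_one : ∀ a : D, α 1 a = a)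
    (q : D) (hq_sa : IsSelfAdjoint q) (hq_idem : q * q = q)
    (hq_orth : ∀ g : G, g ≠ 1 → q * α g q = 0)
    (t : D) (ht_isom : star t * t = 1) (htqt : star t * q * t = 1)
    (K : Finset G) (hK : K.Nonempty) :
    ((∑ g ∈ K, α g q) * (((Real.sqrt K.card : ℂ))⁻¹ • ∑ g ∈ K, α g (q * t)) =
      ((Real.sqrt K.card : ℂ))⁻¹ • ∑ g ∈ K, α g (q * t)) ∧
    (∀ g₀ : G, g₀ ∉ K → (∑ g ∈ K, α g q) ≤ 1 - α g₀ q) ∧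
    ((∃ g₀ : G, g₀ ∉ K) → q ≠ 0 →
      (((Real.sqrt K.card : ℂ))⁻¹ • ∑ g ∈ K, α g (q * t)) ∉ unitary D) := by
  -- pairwise orthogonality of the translates
  have orth : ∀ g h : G, g ≠ h → α g q * α h q = 0 := by
    intro g h hgh
    have h1 : α h q = α g (α (g⁻¹ * h) q) := by
      rw [← hα_mul, mul_inv_cancel_left]
    have h2 : (g⁻¹ * h) ≠ 1 := fun hh => hgh (inv_mul_eq_one.mp hh)
    rw [h1, ← map_mul, hq_orth _ h2, map_zero]
  set P : D := ∑ g ∈ K, α g q with hP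
  have Pidem : P * P = P := by
    rw [hP, Finset.sum_mul_sum]
    refine Finset.sum_congr rfl fun g hg => ?_
    rw [Finset.sum_eq_single g (fun h _ hne => orth g h (Ne.symm hne)) (fun h => absurd hg h),
      ← map_mul, hq_idem]
  have Psa : star P = P := by
    rw [hP, star_sum]
    refine Finset.sum_congr rfl fun g _ => ?_
    rw [← map_star, hq_sa.star_eq]
  have part1 : P * (((Real.sqrt K.card : ℂ))⁻¹ • ∑ g ∈ K, α g (q * t)) =
      ((Real.sqrt K.card : ℂ))⁻¹ • ∑ g ∈ K, α g (q * t) := by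
    rw [mul_smul_comm]
    congr 1
    rw [hP, Finset.sum_mul_sum, Finset.sum_comm]
    refine Finset.sum_congr rfl fun h hh => ?_
    rw [Finset.sum_eq_single h (fun g _ hne => ?_) (fun hne => absurd hh hne), ← map_mul,
      ← mul_assoc, hq_idem]
    rw [map_mul, ← mul_assoc, orth g h hne, zero_mul]
  have part2 : ∀ g₀ : G, g₀ ∉ K → P ≤ 1 - α g₀ q := by
    intro g₀ hg₀
    set r : D := α g₀ q + P with hr
    have hrr : r * r = r := by
      have h1 : α g₀ q * α g₀ q = α g₀ q := by rw [← map_mul, hq_idem]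
      have h2 : α g₀ q * P = 0 := by
        rw [hP, Finset.mul_sum]
        exact Finset.sum_eq_zero fun g hg => orth g₀ g (fun e => hg₀ (e ▸ hg))
      have h3 : P * α g₀ q = 0 := by
        rw [hP, Finset.sum_mul]
        exact Finset.sum_eq_zero fun g hg => orth g g₀ (fun e => hg₀ (e ▸ hg))
      rw [hr, add_mul, mul_add, mul_add, h1, h2, h3, Pidem, add_zero, zero_add]
    have hrsa : star r = r := by
      rw [hr, star_add, Psa, ← map_star, hq_sa.star_eq]
    have hpos : (0 : D) ≤ 1 - r := by
      have h := star_mul_self_nonneg (1 - r)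
      have e : star (1 - r) * (1 - r) = 1 - r := by
        rw [star_sub, star_one, hrsa, sub_mul, one_mul, mul_sub, mul_one, hrr]
        abel
      rwa [e] at h
    rw [hr, ← sub_sub] at hpos
    exact sub_nonneg.mp hpos
  refine ⟨part1, part2, ?_⟩
  rintro ⟨g₀, hg₀⟩ hq hu
  have hss : (((Real.sqrt K.card : ℂ))⁻¹ • ∑ g ∈ K, α g (q * t)) *
      star (((Real.sqrt K.card : ℂ))⁻¹ • ∑ g ∈ K, α g (q * t)) = 1 := hu.2
  have hP1 : P = 1 := by
    calc P = P * ((((Real.sqrt K.card : ℂ))⁻¹ • ∑ g ∈ K, α g (q * t)) *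
        star (((Real.sqrt K.card : ℂ))⁻¹ • ∑ g ∈ K, α g (q * t))) := by rw [hss, mul_one]
    _ = 1 := by rw [← mul_assoc, part1, hss]
  have hle := part2 g₀ hg₀
  rw [hP1] at hle
  have h1 : α g₀ q ≤ 0 := by
    have := sub_nonneg.mpr hle
    simpa using this
  have h2 : (0 : D) ≤ α g₀ q := by
    have := star_mul_self_nonneg (α g₀ q)
    rwa [← map_star, hq_sa.star_eq, ← map_mul, hq_idem] at this
  have h0 : α g₀ q = 0 := le_antisymm h1 h2
  refine hq ?_
  have e := hα_mul g₀⁻¹ g₀ q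
  rw [inv_mul_cancel, hα_one, h0, map_zero] at e
  exact e
end

section
/- Let D be a C*-algebra, d ∈ D a contraction (‖d‖ ≤ 1), and x ∈ D a positive element such that d*xd = x and d*x²d = x². Then dx = xd. -/
/-- Let `D` be a C*-algebra, `d ∈ D` a contraction, and `x ∈ D` positive
with `d*xd = x` and `d*x²d = x²`.  Then `dx = xd`. -/
theorem stmt11 {D : Type*} [NonUnitalCStarAlgebra D] [PartialOrder D] [StarOrderedRing D]
    (d x : D) (hd : ‖d‖ ≤ 1) (hx : 0 ≤ x)
    (h1 : star d * x * d = x) (h2 : star d * (x * x) * d = x * x) :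
    d * x = x * d := by
  have hxs : star x = x := IsSelfAdjoint.of_nonneg hx
  set z := d * x - x * d with hz
  suffices hz0 : z = 0 from sub_eq_zero.mp hz0
  rw [← CStarRing.star_mul_self_eq_zero_iff]
  have hstar : star z = x * star d - star d * x := by
    simp [hz, hxs, star_sub]
  have key : star z * z = x * (star d * d) * x - x * x := by
    rw [hstar, hz]
    have e1 : x * star d * x * d = x * x := by
      rw [mul_assoc, mul_assoc, ← mul_assoc (star d), h1]
    have e2 : star d * x * d * x = x * x := by rw [h1]
    have e3 : star d * x * (x * d) = x * x := by
      have := h2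
      rw [← h2]; noncomm_ring
    calc (x * star d - star d * x) * (d * x - x * d)
        = x * (star d * d) * x - x * star d * x * d - star d * x * d * x + star d * x * (x * d) := by
          noncomm_ring
      _ = x * (star d * d) * x - x * x := by
          rw [e1, e2, e3]; noncomm_ring
  have hle : star z * z ≤ 0 := by
    rw [key, sub_nonpos]
    calc x * (star d * d) * x = star x * (star d * d) * x := by rw [hxs]
      _ ≤ ‖star d * d‖ • (star x * x) := CStarAlgebra.star_left_conjugate_le_norm_smul (IsSelfAdjoint.star_mul_self d)
      _ ≤ (1 : ℝ) • (star x * x) := by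
          have hn : ‖star d * d‖ ≤ (1 : ℝ) :=
            calc ‖star d * d‖ ≤ ‖star d‖ * ‖d‖ := norm_mul_le _ _
              _ ≤ 1 * 1 := by rw [norm_star]; exact mul_le_mul hd hd (norm_nonneg d) zero_le_one
              _ = 1 := one_mul 1
          exact smul_le_smul_of_nonneg_right hn (star_mul_self_nonneg x)
      _ = x * x := by rw [one_smul, hxs]
  exact le_antisymm hle (star_mul_self_nonneg z)
end
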